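/- Subjective abductive explanations can fail to exist: there exists an MCM Γ = (S,Φ), a state s ∈ S and function f ∈ Φ such that for no term λ does (Γ,s,f) ⊨ □F AXp(λ, f(s)). Concretely, with Atm₀ = {si, or, cl, an}, Val = {0,1}, S = 2^Atm₀, Φ the set of all f with: f(s)=1 whenever {si,or,cl,an} ⊆ s; f monotone (s ⊂ s' and f(s)=1 imply f(s')=1); and f(s)=0 whenever an ∉ s; s₁ = {si, or, an}; and f₁(s)=1 iff an ∈ s and {or,cl} ∩ s ≠ ∅: then f₁ ∈ Φ and there is no term λ with (Γ,s₁,f₁) ⊨ □F AXp(λ,1). -/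

import Mathlib

/-- Formulas of the language L of PLC. -/
inductive Form (Atm Val : Type) : Type
  | atom : Atm → Form Atm Val
  | dec  : Val → Form Atm Val
  | neg  : Form Atm Val → Form Atm Val
  | and  : Form Atm Val → Form Atm Val → Form Atm Val
  | boxI : Form Atm Val → Form Atm Val
  | boxF : Form Atm Val → Form Atm Val

variable {Atm Val : Type}

def Form.impl (φ ψ : Form Atm Val) : Form Atm Val := .neg (.and φ (.neg ψ))

/-- Satisfaction at a pointed MCM (Γ,s,f) with Γ = (S,Φ). -/
def Sat (S : Set (Set Atm)) (Φ : Set ((Set Atm) → Val)) :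
    Set Atm → ((Set Atm) → Val) → Form Atm Val → Prop
  | s, _, .atom p => p ∈ s
  | s, f, .dec x => f s = x
  | s, f, .neg φ => ¬ Sat S Φ s f φ
  | s, f, .and φ ψ => Sat S Φ s f φ ∧ Sat S Φ s f ψ
  | _, f, .boxI φ => ∀ s' ∈ S, Sat S Φ s' f φ
  | s, _, .boxF φ => ∀ f' ∈ Φ, Sat S Φ s f' φ

/-- A valid formula used as the unit of big conjunctions. -/
def Form.tru [Inhabited Val] : Form Atm Val :=
  .neg (.and (.dec default) (.neg (.dec default)))

/-- Conjunction of a list of formulas. -/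
def bigAnd [Inhabited Val] (l : List (Form Atm Val)) : Form Atm Val :=
  l.foldr .and .tru

/-- cn(Y,X): atoms in Y positively, atoms in X \ Y negatively. -/
noncomputable def cnOn [DecidableEq Atm] [Inhabited Val] (Y X : Finset Atm) : Form Atm Val :=
  bigAnd (X.val.toList.map (fun p => if p ∈ Y then Form.atom p else .neg (.atom p)))

/-- The ceteris paribus modality [X]φ as an abbreviation. -/
noncomputable def cpBox [DecidableEq Atm] [Inhabited Val] (X : Finset Atm) (φ : Form Atm Val) :
    Form Atm Val :=
  bigAnd (X.powerset.val.toList.map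
    (fun Y => (cnOn Y X).impl (.boxI ((cnOn Y X).impl φ))))

/-- The dual ⟨X⟩φ. -/
noncomputable def cpDia [DecidableEq Atm] [Inhabited Val] (X : Finset Atm) (φ : Form Atm Val) :
    Form Atm Val := .neg (cpBox X (.neg φ))

/-- A term: a consistent conjunction of literals. -/
structure Term (Atm : Type) where
  pos : Finset Atm
  negs : Finset Atm
  disj : Disjoint pos negs

def Term.atoms [DecidableEq Atm] (t : Term Atm) : Finset Atm := t.pos ∪ t.negs

/-- The formula expressed by a term. -/
noncomputable def Term.form [Inhabited Val] (t : Term Atm) : Form Atm Val :=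
  .and (bigAnd (t.pos.val.toList.map Form.atom))
       (bigAnd (t.negs.val.toList.map (fun p => .neg (.atom p))))

/-- PImp(λ,x): λ is a prime implicant for the classification x. -/
noncomputable def PImp [DecidableEq Atm] [Inhabited Val] (t : Term Atm) (x : Val) : Form Atm Val :=
  .boxI ((t.form).impl (.and (.dec x)
    (bigAnd (t.atoms.val.toList.map
      (fun p => cpDia (t.atoms.erase p) (.neg (.dec x)))))))

/-- AXp(λ,x): λ is an abductive explanation of the actual classification x. -/
noncomputable def AXp [DecidableEq Atm] [Inhabited Val] (t : Term Atm) (x : Val) : Form Atm Val :=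
  .and t.form (PImp t x)

/-- The four paper features: significance, originality, clarity, anonymity. -/
inductive PAtm : Type
  | si | orig | cl | an
deriving DecidableEq

/-- The set of input instances: all paper profiles. -/
def exS : Set (Set PAtm) := Set.univ

/-- The set of admissible classifiers: those satisfying the three constraints. -/
def exPhi : Set ((Set PAtm) → Fin 2) :=
  {f | (∀ s, ({PAtm.si, PAtm.orig, PAtm.cl, PAtm.an} : Set PAtm) ⊆ s → f s = 1) ∧
       (∀ s s' : Set PAtm, s ⊂ s' → f s = 1 → f s' = 1) ∧
       (∀ s, PAtm.an ∉ s → f s = 0)}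

/-- The actual instance s₁ = {si, or, an}. -/
def exs1 : Set PAtm := {PAtm.si, PAtm.orig, PAtm.an}

open Classical in
/-- The classifier f₁: accept iff anonymous and (original or clear). -/
noncomputable def exf1 : Set PAtm → Fin 2 :=
  fun s => if PAtm.an ∈ s ∧ (PAtm.orig ∈ s ∨ PAtm.cl ∈ s) then 1 else 0

section Aux

variable [Inhabited Val] {S : Set (Set Atm)} {Φ : Set ((Set Atm) → Val)}
  {s : Set Atm} {f : (Set Atm) → Val}

lemma satTru : Sat S Φ s f (Form.tru : Form Atm Val) := by
  simp [Form.tru, Sat]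

lemma satBigAnd {l : List (Form Atm Val)} :
    Sat S Φ s f (bigAnd l) ↔ ∀ φ ∈ l, Sat S Φ s f φ := by
  induction l with
  | nil => simpa [bigAnd] using satTru
  | cons a l ih =>
      simp only [bigAnd, List.foldr_cons, List.mem_cons] at ih ⊢
      show Sat S Φ s f a ∧ _ ↔ _
      rw [ih]
      constructor
      · rintro ⟨h1, h2⟩ φ (rfl | hφ)
        · exact h1
        · exact h2 φ hφ
      · intro h; exact ⟨h a (Or.inl rfl), fun φ hφ => h φ (Or.inr hφ)⟩

omit [Inhabited Val] in
lemma satImpl {φ ψ : Form Atm Val} :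
    Sat S Φ s f (φ.impl ψ) ↔ (Sat S Φ s f φ → Sat S Φ s f ψ) := by
  show ¬ (Sat S Φ s f φ ∧ ¬ Sat S Φ s f ψ) ↔ _
  tauto

lemma satTermForm [DecidableEq Atm] {t : Term Atm} :
    Sat S Φ s f (t.form : Form Atm Val) ↔
      (∀ p ∈ t.pos, p ∈ s) ∧ (∀ p ∈ t.negs, p ∉ s) := by
  show Sat S Φ s f _ ∧ Sat S Φ s f _ ↔ _
  rw [satBigAnd, satBigAnd]
  constructor
  · rintro ⟨h1, h2⟩
    refine ⟨fun p hp => h1 _ (List.mem_map_of_mem (by simpa using hp)), ?_⟩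
    intro p hp
    exact h2 _ (List.mem_map_of_mem (by simpa using hp))
  · rintro ⟨h1, h2⟩
    constructor
    · rintro φ hφ
      obtain ⟨p, hp, rfl⟩ := List.mem_map.1 hφ
      exact h1 p (by simpa using hp)
    · rintro φ hφ
      obtain ⟨p, hp, rfl⟩ := List.mem_map.1 hφ
      exact h2 p (by simpa using hp)

lemma satCnOn [DecidableEq Atm] {Y X : Finset Atm} :
    Sat S Φ s f (cnOn Y X : Form Atm Val) ↔ ∀ p ∈ X, (p ∈ Y ↔ p ∈ s) := by
  rw [cnOn, satBigAnd]
  constructor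
  · intro h p hp
    have h2 := h _ (List.mem_map_of_mem (by simpa using hp))
    by_cases hY : p ∈ Y
    · rw [if_pos hY] at h2; simp only [hY, true_iff]; exact h2
    · rw [if_neg hY] at h2; simp only [hY, false_iff]; exact h2
  · intro h φ hφ
    obtain ⟨p, hp, rfl⟩ := List.mem_map.1 hφ
    have := h p (by simpa using hp)
    by_cases hY : p ∈ Y <;> simp [hY] at this ⊢ <;> [exact this; exact (this ·)]

lemma satCpBox_of [DecidableEq Atm] {X : Finset Atm} {φ : Form Atm Val}
    (h : ∀ s' ∈ S, (∀ p ∈ X, (p ∈ s' ↔ p ∈ s)) → Sat S Φ s' f φ) :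
    Sat S Φ s f (cpBox X φ) := by
  rw [cpBox, satBigAnd]
  intro ψ hψ
  obtain ⟨Y, hY, rfl⟩ := List.mem_map.1 hψ
  rw [satImpl]
  intro hs
  intro s' hs'
  rw [satImpl]
  intro hs''
  refine h s' hs' (fun p hp => ?_)
  rw [satCnOn] at hs hs''
  exact (hs'' p hp).symm.trans (hs p hp)

lemma satCpDia [DecidableEq Atm] {X : Finset Atm} {φ : Form Atm Val}
    (h : Sat S Φ s f (cpDia X φ)) :
    ∃ s' ∈ S, (∀ p ∈ X, (p ∈ s' ↔ p ∈ s)) ∧ Sat S Φ s' f φ := by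
  by_contra hc
  push_neg at hc
  exact h (satCpBox_of (fun s' hs' hagree => hc s' hs' hagree))

end Aux

open Classical in
/-- The second admissible classifier: accept iff significant and anonymous. -/
noncomputable def exf2 : Set PAtm → Fin 2 :=
  fun s => if PAtm.si ∈ s ∧ PAtm.an ∈ s then 1 else 0

lemma exf1_eq_one {s : Set PAtm} :
    exf1 s = 1 ↔ (PAtm.an ∈ s ∧ (PAtm.orig ∈ s ∨ PAtm.cl ∈ s)) := by
  unfold exf1; split <;> simp_all

lemma exf2_eq_one {s : Set PAtm} :
    exf2 s = 1 ↔ (PAtm.si ∈ s ∧ PAtm.an ∈ s) := by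
  unfold exf2; split <;> simp_all

lemma exf1_mem : exf1 ∈ exPhi := by
  refine ⟨fun s hs => ?_, fun s s' hss h => ?_, fun s hs => ?_⟩
  · rw [exf1_eq_one]
    exact ⟨hs (by simp), Or.inl (hs (by simp))⟩
  · rw [exf1_eq_one] at h ⊢
    exact ⟨hss.1 h.1, h.2.imp (hss.1 ·) (hss.1 ·)⟩
  · unfold exf1; rw [if_neg]; rintro ⟨h1, -⟩; exact hs h1

lemma exf2_mem : exf2 ∈ exPhi := by
  refine ⟨fun s hs => ?_, fun s s' hss h => ?_, fun s hs => ?_⟩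
  · rw [exf2_eq_one]
    exact ⟨hs (by simp), hs (by simp)⟩
  · rw [exf2_eq_one] at h ⊢
    exact ⟨hss.1 h.1, hss.1 h.2⟩
  · unfold exf2; rw [if_neg]; rintro ⟨-, h2⟩; exact hs h2

/-- subjective abductive explanations can fail to exist: f₁ belongs
to Φ, yet no term is a subjective abductive explanation of f₁(s₁) = 1. -/
theorem no_subjective_axp :
    exf1 ∈ exPhi ∧
      ¬ ∃ t : Term PAtm, Sat exS exPhi exs1 exf1 (.boxF (AXp t 1)) := by
  refine ⟨exf1_mem, ?_⟩
  rintro ⟨t, H⟩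
  have H1 : Sat exS exPhi exs1 exf1 (AXp t 1) := H exf1 exf1_mem
  have H2 : Sat exS exPhi exs1 exf2 (AXp t 1) := H exf2 exf2_mem
  have hform1 : Sat exS exPhi exs1 exf1 t.form := H1.1
  rw [satTermForm] at hform1
  have hclpos : PAtm.cl ∉ t.pos := fun h => by
    have := hform1.1 _ h; simp [exs1] at this
  -- t.form holds at the set of positive atoms, for any classifier
  have hsp : ∀ g : Set PAtm → Fin 2,
      Sat exS exPhi (↑t.pos) g (t.form : Form PAtm (Fin 2)) := by
    intro g
    rw [satTermForm]
    refine ⟨fun p hp => by simpa using hp, fun p hp hps => ?_⟩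
    exact (Finset.disjoint_right.mp t.disj hp) (by simpa using hps)
  have hmem : (↑t.pos : Set PAtm) ∈ exS := trivial
  have h1 := (satImpl.1 (H1.2 (↑t.pos) hmem)) (hsp exf1)
  have h2 := (satImpl.1 (H2.2 (↑t.pos) hmem)) (hsp exf2)
  have hv1 : exf1 ↑t.pos = 1 := h1.1
  have hv2 : exf2 ↑t.pos = 1 := h2.1
  rw [exf1_eq_one] at hv1
  rw [exf2_eq_one] at hv2
  have han : PAtm.an ∈ t.pos := by simpa using hv1.1
  have hsi : PAtm.si ∈ t.pos := by simpa using hv2.1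
  have horig : PAtm.orig ∈ t.pos := by
    rcases hv1.2 with h | h
    · simpa using h
    · exact absurd (by simpa using h) hclpos
  -- minimality clause of PImp for exf2 at the atom `orig`
  have horigA : PAtm.orig ∈ t.atoms := Finset.mem_union_left _ horig
  have hdia : Sat exS exPhi (↑t.pos) exf2
      (cpDia (t.atoms.erase PAtm.orig) (.neg (.dec 1))) := by
    have := satBigAnd.1 h2.2
    exact this _ (List.mem_map_of_mem (by simpa using horigA))
  obtain ⟨s'', -, hagree, hne⟩ := satCpDia hdia
  have hsi'' : PAtm.si ∈ s'' := by
    have := hagree PAtm.si (Finset.mem_erase.2 ⟨by simp, Finset.mem_union_left _ hsi⟩)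
    exact this.2 (by simpa using hsi)
  have han'' : PAtm.an ∈ s'' := by
    have := hagree PAtm.an (Finset.mem_erase.2 ⟨by simp, Finset.mem_union_left _ han⟩)
    exact this.2 (by simpa using han)
  exact hne (exf2_eq_one.2 ⟨hsi'', han''⟩)
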